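/- Let G be a k-uniform hypergraph on n vertices with degree sequence d₁ ≥ d₂ ≥ … ≥ d_n and d₁ > d₂ > 0, and let d* ∈ ((d₁/d₂)^{1/k}, d₁/d₂) be a root of h(t) = d₂t^k + (d₂−d₁)t^{k−1} − d₁. Then d₁ + d₁(1/d*)^{k−1} < d₁ + d₁^{1/k} d₂^{1−1/k}; consequently the bound μ(G) ≤ d₁ + d₁(1/d*)^{k−1} is strictly sharper than the bound μ(G) ≤ d₁ + d₁^{1/k} d₂^{1−1/k}. -/

import Mathlib

/-- The spectral radius of an order-`k` tensor of dimension `n`: the largest modulus of its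
(complex) eigenvalues, where `ρ` is an eigenvalue if `T x = ρ x^{[k-1]}` for some `x ≠ 0`. -/
noncomputable def specRad (n k : ℕ) (T : Fin n → (Fin (k-1) → Fin n) → ℝ) : ℝ :=
  sSup {r : ℝ | ∃ ρ : ℂ, ‖ρ‖ = r ∧ ∃ x : Fin n → ℂ, x ≠ 0 ∧
    ∀ i, (∑ f : Fin (k-1) → Fin n, (T i f : ℂ) * ∏ a, x (f a)) = ρ * x i ^ (k-1)}

/-- A hypergraph on vertex set `Fin n` is a finite set of edges; `hDeg` is the degree of
vertex `i`, the number of edges containing `i`. -/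
def hDeg (n : ℕ) (E : Finset (Finset (Fin n))) (i : Fin n) : ℕ :=
  (E.filter (fun e => i ∈ e)).card

/-- The average 2-degree of vertex `i` in a `k`-uniform hypergraph:
`m_i = (Σ_{{i,i₂,…,i_k} ∈ E_i} d_{i₂} ⋯ d_{i_k}) / d_i^{k-1}`. -/
noncomputable def avg2 (n k : ℕ) (E : Finset (Finset (Fin n))) (i : Fin n) : ℝ :=
  (∑ e ∈ E.filter (fun e => i ∈ e), ∏ j ∈ e.erase i, (hDeg n E j : ℝ)) /
    (hDeg n E i : ℝ) ^ (k-1)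

/-- The adjacency tensor of a `k`-uniform hypergraph: entry `1/(k-1)!` at `(i₁,…,i_k)` when
`{i₁,…,i_k}` is an edge, and `0` otherwise. -/
noncomputable def adjT (n k : ℕ) (E : Finset (Finset (Fin n))) :
    Fin n → (Fin (k-1) → Fin n) → ℝ :=
  fun i f => if insert i (Finset.image f Finset.univ) ∈ E then 1 / (k-1).factorial else 0

/-- The signless Laplacian tensor `Q(G) = D(G) + A(G)`. -/
noncomputable def qT (n k : ℕ) (E : Finset (Finset (Fin n))) :
    Fin n → (Fin (k-1) → Fin n) → ℝ :=
  fun i f => (if ∀ a, f a = i then (hDeg n E i : ℝ) else 0) + adjT n k E i f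

/-- A hypergraph is connected if every pair of distinct vertices is joined by a sequence of
pairwise intersecting edges. -/
def HConn (n : ℕ) (E : Finset (Finset (Fin n))) : Prop :=
  ∀ u v : Fin n, u ≠ v → ∃ r : ℕ, ∃ es : Fin (r+1) → Finset (Fin n),
    (∀ s, es s ∈ E) ∧ u ∈ es 0 ∧ v ∈ es (Fin.last r) ∧
    ∀ s : Fin r, (es s.castSucc ∩ es s.succ).Nonempty


section Aux

lemma part1_aux (k : ℕ) (hk : 2 ≤ k) (d1 d2 dstar : ℝ) (hd2 : 0 < d2) (hd12 : d2 < d1)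
    (hlow : (d1/d2) ^ ((1:ℝ)/k) < dstar) :
    d1 * (1/dstar) ^ (k-1) < d1 ^ ((1:ℝ)/k) * d2 ^ (1 - (1:ℝ)/k) := by
  have hd1 : 0 < d1 := hd2.trans hd12
  have hr : (1:ℝ) < d1/d2 := (one_lt_div hd2).2 hd12
  have hr0 : (0:ℝ) < d1/d2 := by positivity
  have hb0 : (0:ℝ) < (d1/d2) ^ ((1:ℝ)/k) := Real.rpow_pos_of_pos hr0 _
  have hds1 : (1:ℝ) < dstar := lt_of_le_of_lt (Real.one_le_rpow hr.le (by positivity)) hlow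
  have hds0 : (0:ℝ) < dstar := by linarith
  have hkR : (0:ℝ) < (k:ℝ) := by positivity
  set θ : ℝ := 1 - (1:ℝ)/k with hθ
  have hθeq : θ = ((k-1 : ℕ):ℝ) * ((1:ℝ)/k) := by
    rw [hθ, Nat.cast_sub (by omega)]
    field_simp
    simp
  have hpow : (d1/d2) ^ θ < dstar ^ (k-1) := by
    have h1 : ((d1/d2) ^ ((1:ℝ)/k)) ^ (k-1) < dstar ^ (k-1) :=
      pow_lt_pow_left₀ hlow hb0.le (by omega)
    calc (d1/d2) ^ θ = (d1/d2) ^ (((1:ℝ)/k) * ((k-1:ℕ):ℝ)) := by rw [hθeq, mul_comm]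
      _ = ((d1/d2) ^ ((1:ℝ)/k)) ^ ((k-1:ℕ):ℝ) := by rw [Real.rpow_mul hr0.le]
      _ = ((d1/d2) ^ ((1:ℝ)/k)) ^ (k-1) := Real.rpow_natCast _ _
      _ < dstar ^ (k-1) := h1
  have hsum : (1:ℝ)/k + θ = 1 := by rw [hθ]; ring
  have key : d1 ^ ((1:ℝ)/k) * d1 ^ θ = d1 := by
    rw [← Real.rpow_add hd1, hsum, Real.rpow_one]
  have hRHS : d1 ^ ((1:ℝ)/k) * d2 ^ θ = d1 / (d1/d2) ^ θ := by
    rw [Real.div_rpow hd1.le hd2.le, eq_div_iff (by positivity)]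
    field_simp
    linear_combination key
  rw [hRHS]
  have h2 : d1 * (1/dstar)^(k-1) = d1 / dstar ^ (k-1) := by
    rw [one_div, inv_pow]; ring
  rw [h2]
  exact div_lt_div_of_pos_left hd1 (by positivity) hpow

lemma eig_bound (n k : ℕ) (hn : 0 < n) (T : Fin n → (Fin (k-1) → Fin n) → ℝ)
    (hT : ∀ i f, 0 ≤ T i f) (w : Fin n → ℝ) (hw : ∀ j, 0 < w j) (B : ℝ) (hB : 0 ≤ B)
    (hrow : ∀ i, (∑ f : Fin (k-1) → Fin n, T i f * ∏ a, w (f a)) ≤ B * w i ^ (k-1)) :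
    specRad n k T ≤ B := by
  apply Real.sSup_le _ hB
  rintro r ⟨ρ, hρ, x, hx, heig⟩
  set y : Fin n → ℝ := fun j => ‖x j‖ / w j with hy
  have : Nonempty (Fin n) := ⟨⟨0, hn⟩⟩
  obtain ⟨i₀, -, hi₀⟩ := Finset.exists_max_image Finset.univ y ⟨⟨0, hn⟩, Finset.mem_univ _⟩
  have hxw : ∀ j, ‖x j‖ = w j * y j := by
    intro j
    show ‖x j‖ = w j * (‖x j‖ / w j)
    rw [mul_comm]
    exact (div_mul_cancel₀ _ (hw j).ne').symm
  have hy0 : 0 < y i₀ := by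
    obtain ⟨j, hj⟩ := Function.ne_iff.1 hx
    have : 0 < y j := by
      rw [hy]
      have : 0 < ‖x j‖ := by
        simpa using (norm_pos_iff.2 hj)
      exact div_pos this (hw j)
    exact lt_of_lt_of_le this (hi₀ j (Finset.mem_univ _))
  have hynn : ∀ j, 0 ≤ y j := fun j => div_nonneg (norm_nonneg _) (hw j).le
  have main : ‖ρ‖ * (w i₀ ^ (k-1) * y i₀ ^ (k-1)) ≤ B * w i₀ ^ (k-1) * y i₀ ^ (k-1) := by
    calc ‖ρ‖ * (w i₀ ^ (k-1) * y i₀ ^ (k-1))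
        = ‖ρ * x i₀ ^ (k-1)‖ := by
          rw [norm_mul, norm_pow, hxw i₀, mul_pow]
      _ = ‖∑ f : Fin (k-1) → Fin n, (T i₀ f : ℂ) * ∏ a, x (f a)‖ := by
          rw [heig i₀]
      _ ≤ ∑ f : Fin (k-1) → Fin n, ‖(T i₀ f : ℂ) * ∏ a, x (f a)‖ :=
          norm_sum_le _ _
      _ = ∑ f : Fin (k-1) → Fin n, T i₀ f * ∏ a, ‖x (f a)‖ := by
          refine Finset.sum_congr rfl fun f _ => ?_
          rw [norm_mul, norm_prod, Complex.norm_real, Real.norm_eq_abs, abs_of_nonneg (hT i₀ f)]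
      _ ≤ ∑ f : Fin (k-1) → Fin n, T i₀ f * ∏ a, (w (f a) * y i₀) := by
          refine Finset.sum_le_sum fun f _ => ?_
          refine mul_le_mul_of_nonneg_left ?_ (hT i₀ f)
          refine Finset.prod_le_prod (fun a _ => norm_nonneg _) fun a _ => ?_
          rw [hxw]
          exact mul_le_mul_of_nonneg_left (hi₀ (f a) (Finset.mem_univ _)) (hw (f a)).le
      _ = (∑ f : Fin (k-1) → Fin n, T i₀ f * ∏ a, w (f a)) * y i₀ ^ (k-1) := by
          rw [Finset.sum_mul]
          refine Finset.sum_congr rfl fun f _ => ?_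
          rw [Finset.prod_mul_distrib, Finset.prod_const, mul_assoc]
          simp
      _ ≤ (B * w i₀ ^ (k-1)) * y i₀ ^ (k-1) :=
          mul_le_mul_of_nonneg_right (hrow i₀) (pow_nonneg (hynn i₀) _)
      _ = B * w i₀ ^ (k-1) * y i₀ ^ (k-1) := by ring
  rw [← hρ]
  have hpos : 0 < w i₀ ^ (k-1) * y i₀ ^ (k-1) :=
    mul_pos (pow_pos (hw i₀) _) (pow_pos hy0 _)
  nlinarith [hpos, main]

lemma memS_facts (n k : ℕ) (hk : 2 ≤ k) (E : Finset (Finset (Fin n)))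
    (hcard : ∀ e ∈ E, e.card = k) (i : Fin n) (f : Fin (k-1) → Fin n)
    (hf : insert i (Finset.image f Finset.univ) ∈ E) :
    Function.Injective f ∧ i ∉ Finset.image f Finset.univ ∧
      Finset.image f Finset.univ = (insert i (Finset.image f Finset.univ)).erase i := by
  set im := Finset.image f Finset.univ with him
  have hcim : im.card ≤ k - 1 := by
    calc im.card ≤ Finset.univ.card := Finset.card_image_le
      _ = k - 1 := by simp
  have hce : (insert i im).card = k := hcard _ hf
  have hinot : i ∉ im := by
    intro hmem
    rw [Finset.insert_eq_self.2 hmem] at hce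
    omega
  refine ⟨?_, hinot, ?_⟩
  · have hcard_im : im.card = k - 1 := by
      have := Finset.card_insert_of_notMem hinot
      omega
    have : im.card = (Finset.univ : Finset (Fin (k-1))).card := by simp [hcard_im]
    have hinj := Finset.injOn_of_card_image_eq (by rw [← him, this])
    rw [Finset.coe_univ] at hinj
    exact Set.injOn_univ.1 hinj
  · rw [Finset.erase_insert hinot]

lemma adj_row (n k : ℕ) (hk : 2 ≤ k) (E : Finset (Finset (Fin n)))
    (hcard : ∀ e ∈ E, e.card = k) (w : Fin n → ℝ) (i : Fin n) (c : ℝ) (hc : 0 ≤ c)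
    (hwb : ∀ f : Fin (k-1) → Fin n, Function.Injective f →
      i ∉ Finset.image f Finset.univ → insert i (Finset.image f Finset.univ) ∈ E →
      (∏ a, w (f a)) ≤ c) :
    (∑ f : Fin (k-1) → Fin n, adjT n k E i f * ∏ a, w (f a)) ≤ (hDeg n E i : ℝ) * c := by
  classical
  set S : Finset (Fin (k-1) → Fin n) :=
    Finset.univ.filter (fun f => insert i (Finset.image f Finset.univ) ∈ E) with hS
  have hsum : (∑ f : Fin (k-1) → Fin n, adjT n k E i f * ∏ a, w (f a))
      = ∑ f ∈ S, (1 / ((k-1).factorial : ℝ)) * ∏ a, w (f a) := by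
    rw [hS, Finset.sum_filter]
    refine Finset.sum_congr rfl fun f _ => ?_
    simp only [adjT]
    split <;> simp
  rw [hsum]
  have hcount : S.card ≤ hDeg n E i * (k-1).factorial := by
    have hfib : ∀ e ∈ S.image (fun f => insert i (Finset.image f Finset.univ)),
        (S.filter (fun f => insert i (Finset.image f Finset.univ) = e)).card
          ≤ (k-1).factorial := by
      intro e he
      obtain ⟨f₀, hf₀, hfe⟩ := Finset.mem_image.1 he
      have hf₀E : insert i (Finset.image f₀ Finset.univ) ∈ E := (Finset.mem_filter.1 hf₀).2
      have heE : e ∈ E := hfe ▸ hf₀E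
      have hie : i ∈ e := hfe ▸ Finset.mem_insert_self _ _
      have ht : (e.erase i).card = k - 1 := by
        rw [Finset.card_erase_of_mem hie, hcard e heE]
      have hsub : (S.filter (fun f => insert i (Finset.image f Finset.univ) = e)) ⊆
          Finset.univ.filter (fun f => Function.Injective f ∧ ∀ a, f a ∈ e.erase i) := by
        intro f hf
        rw [Finset.mem_filter] at hf
        have hfE : insert i (Finset.image f Finset.univ) ∈ E :=
          (Finset.mem_filter.1 hf.1).2
        obtain ⟨hinj, hinot, him⟩ := memS_facts n k hk E hcard i f hfE
        refine Finset.mem_filter.2 ⟨Finset.mem_univ _, hinj, fun a => ?_⟩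
        rw [← hf.2, ← him]
        exact Finset.mem_image_of_mem f (Finset.mem_univ a)
      refine le_trans (Finset.card_le_card hsub) ?_
      rw [← Fintype.card_subtype]
      have hinjmap : Function.Injective
          (fun g : {f : Fin (k-1) → Fin n //
              Function.Injective f ∧ ∀ a, f a ∈ e.erase i} =>
            (⟨fun a => ⟨g.1 a, g.2.2 a⟩,
              fun a b h => g.2.1 (congrArg Subtype.val h)⟩ :
                Fin (k-1) ↪ {x // x ∈ e.erase i})) := by
        intro g g' h
        apply Subtype.ext
        funext a
        exact congrArg Subtype.val
          (congrArg (fun emb => (emb : Fin (k-1) ↪ {x // x ∈ e.erase i}).toFun a) h)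
      have hcle := Fintype.card_le_of_injective _ hinjmap
      rwa [Fintype.card_embedding_eq, Fintype.card_coe, ht, Fintype.card_fin,
        Nat.descFactorial_self] at hcle
    calc S.card ≤ (k-1).factorial *
          (S.image (fun f => insert i (Finset.image f Finset.univ))).card :=
          Finset.card_le_mul_card_image S ((k-1).factorial) hfib
      _ ≤ (k-1).factorial * (E.filter (fun e => i ∈ e)).card := by
          refine Nat.mul_le_mul_left _ (Finset.card_le_card ?_)
          intro e he
          obtain ⟨f, hf, rfl⟩ := Finset.mem_image.1 he
          exact Finset.mem_filter.2 ⟨(Finset.mem_filter.1 hf).2, Finset.mem_insert_self _ _⟩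
      _ = hDeg n E i * (k-1).factorial := by rw [hDeg, Nat.mul_comm]
  have hstep : ∀ f ∈ S, (1 / ((k-1).factorial : ℝ)) * ∏ a, w (f a)
      ≤ (1 / ((k-1).factorial : ℝ)) * c := by
    intro f hf
    rw [hS, Finset.mem_filter] at hf
    obtain ⟨hinj, hinot, -⟩ := memS_facts n k hk E hcard i f hf.2
    exact mul_le_mul_of_nonneg_left (hwb f hinj hinot hf.2) (by positivity)
  calc (∑ f ∈ S, (1 / ((k-1).factorial : ℝ)) * ∏ a, w (f a))
      ≤ ∑ _f ∈ S, (1 / ((k-1).factorial : ℝ)) * c := Finset.sum_le_sum hstep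
    _ = (S.card : ℝ) * ((1 / ((k-1).factorial : ℝ)) * c) := by
        rw [Finset.sum_const, nsmul_eq_mul]
    _ ≤ ((hDeg n E i * (k-1).factorial : ℕ) : ℝ) * ((1 / ((k-1).factorial : ℝ)) * c) :=
        mul_le_mul_of_nonneg_right (Nat.cast_le.2 hcount) (by positivity)
    _ = (hDeg n E i : ℝ) * c := by
        push_cast
        have h0 : ((k-1).factorial : ℝ) ≠ 0 := by positivity
        field_simp

lemma diag_sum (n k : ℕ) (w : Fin n → ℝ) (d : ℝ) (i : Fin n) :
    (∑ f : Fin (k-1) → Fin n, (if ∀ a, f a = i then d else 0) * ∏ a, w (f a))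
      = d * w i ^ (k-1) := by
  classical
  rw [Finset.sum_eq_single (fun _ => i)]
  · rw [if_pos (fun a => rfl)]
    simp [Finset.prod_const]
  · intro f _ hne
    rw [if_neg, zero_mul]
    intro hall
    exact hne (funext hall)
  · intro h
    exact absurd (Finset.mem_univ _) h

end Aux

/-- With `d₁ > d₂ > 0` the two largest degrees of a `k`-uniform hypergraph `G` and `d*` a
root of `h(t) = d₂t^k + (d₂−d₁)t^{k−1} − d₁` in `((d₁/d₂)^{1/k}, d₁/d₂)`, one has
`d₁ + d₁(1/d*)^{k−1} < d₁ + d₁^{1/k} d₂^{1−1/k}`; consequently the bound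
`μ(G) ≤ d₁ + d₁(1/d*)^{k−1}` is strictly sharper than `μ(G) ≤ d₁ + d₁^{1/k} d₂^{1−1/k}`. -/
theorem stmt15 (n k : ℕ) (hk : 2 ≤ k) (hkn : k ≤ n)
    (E : Finset (Finset (Fin n))) (hcard : ∀ e ∈ E, e.card = k)
    (hsort : ∀ i j : Fin n, i ≤ j → hDeg n E j ≤ hDeg n E i)
    (hd2pos : 0 < hDeg n E ⟨1, by omega⟩)
    (hd12 : hDeg n E ⟨1, by omega⟩ < hDeg n E ⟨0, by omega⟩)
    (dstar : ℝ)
    (hroot : (hDeg n E ⟨1, by omega⟩ : ℝ) * dstar ^ k +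
        ((hDeg n E ⟨1, by omega⟩ : ℝ) - (hDeg n E ⟨0, by omega⟩ : ℝ)) * dstar ^ (k-1) -
        (hDeg n E ⟨0, by omega⟩ : ℝ) = 0)
    (hlow : ((hDeg n E ⟨0, by omega⟩ : ℝ) / (hDeg n E ⟨1, by omega⟩ : ℝ)) ^ ((1 : ℝ)/k)
        < dstar)
    (hup : dstar < (hDeg n E ⟨0, by omega⟩ : ℝ) / (hDeg n E ⟨1, by omega⟩ : ℝ)) :
    (hDeg n E ⟨0, by omega⟩ : ℝ) + (hDeg n E ⟨0, by omega⟩ : ℝ) * (1/dstar) ^ (k-1)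
        < (hDeg n E ⟨0, by omega⟩ : ℝ) +
          (hDeg n E ⟨0, by omega⟩ : ℝ) ^ ((1 : ℝ)/k) *
            (hDeg n E ⟨1, by omega⟩ : ℝ) ^ (1 - (1 : ℝ)/k) ∧
      specRad n k (qT n k E) ≤
        (hDeg n E ⟨0, by omega⟩ : ℝ) + (hDeg n E ⟨0, by omega⟩ : ℝ) * (1/dstar) ^ (k-1) := by
  classical
  have hn0 : 0 < n := by omega
  have hn1 : 1 < n := by omega
  set v0 : Fin n := ⟨0, hn0⟩ with hv0
  set v1 : Fin n := ⟨1, hn1⟩ with hv1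
  set d1 : ℝ := (hDeg n E v0 : ℝ) with hd1def
  set d2 : ℝ := (hDeg n E v1 : ℝ) with hd2def
  have hd2 : (0:ℝ) < d2 := by rw [hd2def]; exact_mod_cast hd2pos
  have hd12' : d2 < d1 := by rw [hd1def, hd2def]; exact_mod_cast hd12
  have hd1 : (0:ℝ) < d1 := hd2.trans hd12'
  have hr : (1:ℝ) < d1/d2 := (one_lt_div hd2).2 hd12'
  have hds1 : (1:ℝ) < dstar :=
    lt_of_le_of_lt (Real.one_le_rpow hr.le (by positivity)) hlow
  have hds0 : (0:ℝ) < dstar := by linarith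
  have hBpos : (0:ℝ) < d1 + d1 * (1/dstar) ^ (k-1) := by positivity
  constructor
  · exact add_lt_add_right (part1_aux k hk d1 d2 dstar hd2 hd12' hlow) d1
  · set B : ℝ := d1 + d1 * (1/dstar) ^ (k-1) with hB
    set w : Fin n → ℝ := fun j => if j = v0 then dstar else 1 with hw
    have hwpos : ∀ j, 0 < w j := by
      intro j
      by_cases h : j = v0
      · simpa [hw, h] using hds0
      · simp [hw, h]
    have hqTnn : ∀ i f, 0 ≤ qT n k E i f := by
      intro i f
      unfold qT adjT
      apply add_nonneg
      · split <;> positivity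
      · split <;> positivity
    -- identity: d2 + d2 * dstar = B
    have hkk : dstar ^ k = dstar ^ (k-1) * dstar := by
      rw [← pow_succ]
      congr 1
      omega
    have hpne : dstar ^ (k-1) ≠ 0 := pow_ne_zero _ hds0.ne'
    have hBid : d2 + d2 * dstar = B := by
      rw [hB]
      have h1 : (1/dstar:ℝ)^(k-1) = (dstar^(k-1))⁻¹ := by rw [one_div, inv_pow]
      rw [h1]
      field_simp
      linear_combination hroot - d2 * hkk
    -- row bounds
    have hrow : ∀ i, (∑ f : Fin (k-1) → Fin n, qT n k E i f * ∏ a, w (f a))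
        ≤ B * w i ^ (k-1) := by
      intro i
      have hsplit : (∑ f : Fin (k-1) → Fin n, qT n k E i f * ∏ a, w (f a))
          = (∑ f : Fin (k-1) → Fin n,
              (if ∀ a, f a = i then (hDeg n E i : ℝ) else 0) * ∏ a, w (f a))
            + ∑ f : Fin (k-1) → Fin n, adjT n k E i f * ∏ a, w (f a) := by
        rw [← Finset.sum_add_distrib]
        refine Finset.sum_congr rfl fun f _ => ?_
        unfold qT
        ring
      rw [hsplit, diag_sum]
      by_cases hi : i = v0
      · have hwi : w i = dstar := by simp [hw, hi]
        have hadj : (∑ f : Fin (k-1) → Fin n, adjT n k E i f * ∏ a, w (f a))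
            ≤ (hDeg n E i : ℝ) * 1 := by
          apply adj_row n k hk E hcard w i 1 zero_le_one
          intro f hinj hinot hfE
          refine le_of_eq (Finset.prod_eq_one fun a _ => ?_)
          have hfa : f a ≠ v0 := by
            intro h
            rw [← hi] at h
            exact hinot (h ▸ Finset.mem_image_of_mem f (Finset.mem_univ a))
          simp [hw, hfa]
        have hBw : B * w i ^ (k-1) = d1 * dstar ^ (k-1) + d1 := by
          rw [hwi, hB]
          have h1 : (1/dstar:ℝ)^(k-1) * dstar^(k-1) = 1 := by
            rw [one_div, inv_pow, inv_mul_cancel₀ hpne]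
          nlinarith [h1]
        rw [hBw]
        have hdi1 : (hDeg n E i : ℝ) = d1 := by rw [hi, hd1def]
        rw [hdi1] at hadj ⊢
        rw [hwi]
        linarith [hadj]
      · have hwi : w i = 1 := by simp [hw, hi]
        have hdile : (hDeg n E i : ℝ) ≤ d2 := by
          have hle : v1 ≤ i := by
            rw [Fin.le_def]
            have : i.val ≠ 0 := by
              intro h0
              exact hi (Fin.ext h0)
            exact Nat.one_le_iff_ne_zero.2 this
          exact_mod_cast Nat.cast_le.2 (hsort v1 i hle)
        have hadj : (∑ f : Fin (k-1) → Fin n, adjT n k E i f * ∏ a, w (f a))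
            ≤ (hDeg n E i : ℝ) * dstar := by
          apply adj_row n k hk E hcard w i dstar hds0.le
          intro f hinj hinot hfE
          by_cases hex : ∃ a, f a = v0
          · obtain ⟨a₀, ha₀⟩ := hex
            have hprod : (∏ a, w (f a)) = w (f a₀) := by
              refine Finset.prod_eq_single a₀ (fun b _ hb => ?_)
                (fun h => absurd (Finset.mem_univ _) h)
              have hfb : f b ≠ v0 := fun hbv => hb (hinj (hbv.trans ha₀.symm))
              simp [hw, hfb]
            rw [hprod]
            simp [hw, ha₀]
          · push_neg at hex
            have hprod : (∏ a, w (f a)) = 1 := by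
              refine Finset.prod_eq_one fun a _ => ?_
              simp [hw, hex a]
            rw [hprod]
            exact hds1.le
        rw [hwi, one_pow, mul_one]
        have hmul : (hDeg n E i : ℝ) * dstar ≤ d2 * dstar :=
          mul_le_mul_of_nonneg_right hdile hds0.le
        linarith [hadj, hmul, hBid, hdile]
    exact eig_bound n k hn0 (qT n k E) hqTnn w hwpos B hBpos.le hrow
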